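/- The minimum over x > 0 of x + e^{a/x} satisfies lim_{a → ∞} (log a / a) · inf_{x>0} (x + e^{a/x}) = 1. -/

import Mathlib

open Filter

private lemma tendsto_logdiv : Tendsto (fun x : ℝ => Real.log x / x) atTop (nhds 0) :=
  Real.isLittleO_log_id_atTop.tendsto_div_nhds_zero

private lemma hv_tendsto :
    Tendsto (fun a : ℝ => Real.log (Real.log a) / Real.log a) atTop (nhds 0) :=
  tendsto_logdiv.comp Real.tendsto_log_atTop

/-- Asymptotics at the heart of Theorem 4:
`lim_{a → ∞} (log a / a) · inf_{x>0} (x + e^{a/x}) = 1`. -/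
theorem lambert_tradeoff_asymptotics :
    Tendsto
      (fun a : ℝ =>
        (Real.log a / a) * sInf ((fun x : ℝ => x + Real.exp (a / x)) '' Set.Ioi 0))
      atTop (nhds 1) := by
  have hv := hv_tendsto
  -- eventual hypotheses in `L = log a` space
  have hPL : ∀ᶠ L : ℝ in atTop, 1 ≤ L ∧ Real.log L ≤ L / 8 ∧ 0 ≤ Real.log L := by
    have h1 : ∀ᶠ L : ℝ in atTop, (1 : ℝ) ≤ L := eventually_ge_atTop 1
    have h2 : ∀ᶠ L : ℝ in atTop, Real.log L / L < 1/8 :=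
      tendsto_logdiv.eventually_lt_const (by norm_num)
    filter_upwards [h1, h2] with L hL1 hL2
    have hLpos : (0:ℝ) < L := lt_of_lt_of_le one_pos hL1
    refine ⟨hL1, ?_, Real.log_nonneg hL1⟩
    have := (div_lt_iff₀ hLpos).mp hL2
    nlinarith
  have hev : ∀ᶠ a : ℝ in atTop,
      1 ≤ Real.log a ∧ Real.log (Real.log a) ≤ Real.log a / 8 ∧
        0 ≤ Real.log (Real.log a) :=
    Real.tendsto_log_atTop.eventually hPL
  -- limit of the lower bound function
  have hlo : Tendsto (fun a : ℝ =>
      Real.log a / (Real.log a + 2 * Real.log (Real.log a))) atTop (nhds 1) := by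
    have hd : Tendsto (fun a : ℝ =>
        1 + 2 * (Real.log (Real.log a) / Real.log a)) atTop (nhds 1) := by
      have := (tendsto_const_nhds (x := (1:ℝ)) (f := atTop)).add
        ((tendsto_const_nhds (x := (2:ℝ)) (f := atTop)).mul hv)
      simpa using this
    have h1 : Tendsto (fun a : ℝ =>
        1 / (1 + 2 * (Real.log (Real.log a) / Real.log a))) atTop (nhds 1) := by
      simpa [one_div] using hd.inv₀ one_ne_zero
    refine h1.congr' ?_
    filter_upwards [hev] with a ⟨h1L, h8, hcpos⟩
    have hL : (0:ℝ) < Real.log a := lt_of_lt_of_le one_pos h1L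
    have h9 : 1 + 2 * (Real.log (Real.log a) / Real.log a)
        = (Real.log a + 2 * Real.log (Real.log a)) / Real.log a := by
      field_simp
    rw [h9, one_div_div]
  -- limit of the upper bound function
  have hhi : Tendsto (fun a : ℝ =>
      Real.log a / (Real.log a - 2 * Real.log (Real.log a)) + 1 / Real.log a)
      atTop (nhds 1) := by
    have h2 : Tendsto (fun a : ℝ => 1 / Real.log a) atTop (nhds 0) := by
      simp only [one_div]
      exact Real.tendsto_log_atTop.inv_tendsto_atTop
    have hd : Tendsto (fun a : ℝ =>
        1 - 2 * (Real.log (Real.log a) / Real.log a)) atTop (nhds 1) := by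
      have := (tendsto_const_nhds (x := (1:ℝ)) (f := atTop)).sub
        ((tendsto_const_nhds (x := (2:ℝ)) (f := atTop)).mul hv)
      simpa using this
    have h1 : Tendsto (fun a : ℝ =>
        1 / (1 - 2 * (Real.log (Real.log a) / Real.log a))) atTop (nhds 1) := by
      simpa [one_div] using hd.inv₀ one_ne_zero
    have h3 : Tendsto (fun a : ℝ =>
        1 / (1 - 2 * (Real.log (Real.log a) / Real.log a)) + 1 / Real.log a)
        atTop (nhds 1) := by simpa using h1.add h2
    refine h3.congr' ?_
    filter_upwards [hev] with a ⟨h1L, h8, hcpos⟩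
    have hL : (0:ℝ) < Real.log a := lt_of_lt_of_le one_pos h1L
    have h9 : 1 - 2 * (Real.log (Real.log a) / Real.log a)
        = (Real.log a - 2 * Real.log (Real.log a)) / Real.log a := by
      field_simp
    rw [h9, one_div_div]
  -- squeeze
  refine tendsto_of_tendsto_of_tendsto_of_le_of_le' hlo hhi ?_ ?_
  · -- lower bound
    filter_upwards [hev, eventually_ge_atTop (1:ℝ)] with a ⟨h1L, h8, hcpos⟩ ha1
    have hL : (0:ℝ) < Real.log a := lt_of_lt_of_le one_pos h1L
    have hapos : (0:ℝ) < a := lt_of_lt_of_le one_pos ha1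
    set L := Real.log a with hLdef
    set c := Real.log L with hcdef
    have ht1 : (1:ℝ) ≤ L + 2*c := by linarith
    have htpos : (0:ℝ) < L + 2*c := by linarith
    have hane : a ≠ 0 := ne_of_gt hapos
    have hb : a / (L + 2*c) ≤ sInf ((fun x : ℝ => x + Real.exp (a / x)) '' Set.Ioi 0) := by
      apply le_csInf (Set.Nonempty.image _ ⟨1, Set.mem_Ioi.mpr one_pos⟩)
      rintro y ⟨x, hx, rfl⟩
      have hx : (0:ℝ) < x := hx
      rcases le_or_gt (a/(L+2*c)) x with h | h
      · have := Real.exp_pos (a/x)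
        simp only
        linarith
      · have hax : L + 2*c < a / x := by
          rw [lt_div_iff₀ hx]
          have := (lt_div_iff₀ htpos).mp h
          nlinarith
        have hexp : Real.exp (L + 2*c) = a * (L * L) := by
          rw [two_mul, ← add_assoc, Real.exp_add, Real.exp_add,
            Real.exp_log hapos, Real.exp_log hL]
          ring
        have h1 : a * (L * L) ≤ Real.exp (a/x) := by
          rw [← hexp]
          exact (Real.exp_le_exp.mpr hax.le)
        have h2 : a / (L + 2*c) ≤ a := div_le_self hapos.le ht1
        have hLL : (1:ℝ) ≤ L * L := by nlinarith
        have h3 : a ≤ a * (L * L) := le_mul_of_one_le_right hapos.le hLL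
        simp only
        linarith
    have hrw : L / (L + 2*c) = (L / a) * (a / (L + 2*c)) := by
      field_simp
    rw [hrw]
    exact mul_le_mul_of_nonneg_left hb (by positivity)
  · -- upper bound
    filter_upwards [hev, eventually_ge_atTop (1:ℝ)] with a ⟨h1L, h8, hcpos⟩ ha1
    have hL : (0:ℝ) < Real.log a := lt_of_lt_of_le one_pos h1L
    have hapos : (0:ℝ) < a := lt_of_lt_of_le one_pos ha1
    set L := Real.log a with hLdef
    set c := Real.log L with hcdef
    have hden : (0:ℝ) < L - 2*c := by linarith
    have hane : a ≠ 0 := ne_of_gt hapos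
    set x0 := a / (L - 2*c) with hx0def
    have hx0 : (0:ℝ) < x0 := div_pos hapos hden
    have hax0 : a / x0 = L - 2*c := by
      rw [hx0def]
      field_simp
    have hval : Real.exp (a / x0) = a / (L * L) := by
      rw [hax0, Real.exp_sub, Real.exp_log hapos, two_mul, Real.exp_add,
        Real.exp_log hL]
    have hbdd : BddBelow ((fun x : ℝ => x + Real.exp (a / x)) '' Set.Ioi 0) := by
      refine ⟨0, ?_⟩
      rintro y ⟨x, hx, rfl⟩
      have hx : (0:ℝ) < x := hx
      have := Real.exp_pos (a/x)
      simp only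
      linarith
    have hs : sInf ((fun x : ℝ => x + Real.exp (a / x)) '' Set.Ioi 0)
        ≤ x0 + a / (L * L) := by
      rw [← hval]
      exact csInf_le hbdd ⟨x0, hx0, rfl⟩
    calc (L / a) * sInf ((fun x : ℝ => x + Real.exp (a / x)) '' Set.Ioi 0)
        ≤ (L / a) * (x0 + a / (L * L)) := mul_le_mul_of_nonneg_left hs (by positivity)
      _ = L / (L - 2*c) + 1 / L := by
          rw [hx0def]
          field_simp
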